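/- Let a, b, c, d, e ∈ ℝ define an elliptic curve y² + a·x·y + b·y = x³ + c·x² + d·x + e (the discriminant of this Weierstrass equation is nonzero). Let k be a positive integer and let G = {(a₁ + i·e₁, a₂ + j·e₂) : 0 ≤ i, j ≤ k−1} be a k×k grid with e₁ ≠ 0 and e₂ ≠ 0. If the curve contains at least k distinct points of G, then k < 174960. -/

import Mathlib

open Finset Set Polynomial


/-- At most `t²` integer vectors with `1 ≤ dx` and `dx + |dy| ≤ t`. -/
lemma ball_count (V : Finset (ℤ × ℤ)) (h1 : ∀ v ∈ V, 1 ≤ v.1) (t : ℕ) :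
    ((V.filter (fun v => v.1 + |v.2| ≤ (t:ℤ))).card : ℤ) ≤ (t:ℤ)^2 := by
  have hle : (V.filter (fun v => v.1 + |v.2| ≤ (t:ℤ))).card
      ≤ ((Finset.Ico (0:ℤ) t) ×ˢ (Finset.Ico (0:ℤ) t)).card := by
    apply Finset.card_le_card_of_injOn
      (fun v => if 0 ≤ v.2 then ((t:ℤ) - v.1, v.2) else (-v.2-1, (t:ℤ)-v.1))
    · intro v hv
      simp only [Finset.mem_coe, Finset.mem_filter] at hv
      obtain ⟨hvV, hnorm⟩ := hv
      have hdx := h1 v hvV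
      by_cases h : 0 ≤ v.2
      · rw [abs_of_nonneg h] at hnorm
        simp only [h, if_true, Finset.mem_coe, Finset.mem_product, Finset.mem_Ico, true_and, and_true]
        omega
      · push_neg at h
        rw [abs_of_neg h] at hnorm
        simp only [not_le.2 h, if_false, Finset.mem_coe, Finset.mem_product, Finset.mem_Ico, true_and, and_true]
        omega
    · intro v hv w hw heq
      simp only [Finset.coe_filter, Set.mem_setOf_eq] at hv hw
      obtain ⟨hvV, hvt⟩ := hv; obtain ⟨hwV, hwt⟩ := hw
      have hv1 := h1 v hvV; have hw1 := h1 w hwV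
      by_cases h : 0 ≤ v.2 <;> by_cases h' : 0 ≤ w.2 <;>
        simp only [h, h', if_true, if_false, Prod.mk.injEq] at heq
      · rw [abs_of_nonneg h] at hvt; rw [abs_of_nonneg h'] at hwt
        exact Prod.ext (by omega) heq.2
      · rw [abs_of_nonneg h] at hvt
        rw [abs_of_neg (not_le.1 h')] at hwt
        omega
      · rw [abs_of_neg (not_le.1 h)] at hvt
        rw [abs_of_nonneg h'] at hwt
        omega
      · rw [abs_of_neg (not_le.1 h)] at hvt
        rw [abs_of_neg (not_le.1 h')] at hwt
        exact Prod.ext (by omega) (by omega)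
  calc ((V.filter (fun v => v.1 + |v.2| ≤ (t:ℤ))).card : ℤ)
      ≤ (((Finset.Ico (0:ℤ) t) ×ˢ (Finset.Ico (0:ℤ) t)).card : ℤ) := by exact_mod_cast hle
    _ = (t:ℤ)^2 := by
        rw [Finset.card_product, Int.card_Ico]
        push_cast
        simp
        ring

/-- Layered counting: `T·|V| ≤ Σ norms + Σ_{t<T} t²` for distinct vectors with `dx ≥ 1`. -/
lemma layered_count (V : Finset (ℤ × ℤ)) (h1 : ∀ v ∈ V, 1 ≤ v.1) (T : ℕ) :
    (T:ℤ) * V.card ≤ (∑ v ∈ V, (v.1 + |v.2|)) + ∑ t ∈ Finset.range T, (t:ℤ)^2 := by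
  have key : ∀ t : ℕ, (V.card : ℤ) - (t:ℤ)^2 ≤ ((V.filter (fun v => (t:ℤ) < v.1 + |v.2|)).card : ℤ) := by
    intro t
    have hsplit := Finset.card_filter_add_card_filter_not
      (s := V) (p := fun v => v.1 + |v.2| ≤ (t:ℤ))
    have hball := ball_count V h1 t
    have : (V.filter (fun v => ¬ (v.1 + |v.2| ≤ (t:ℤ)))).card
        = (V.filter (fun v => (t:ℤ) < v.1 + |v.2|)).card := by
      congr 1
      apply Finset.filter_congr
      intro v _
      simp [not_le]
    omega
  have swap : ∑ t ∈ Finset.range T, ((V.filter (fun v => (t:ℤ) < v.1 + |v.2|)).card : ℤ)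
      ≤ ∑ v ∈ V, (v.1 + |v.2|) := by
    have e1 : ∀ t ∈ Finset.range T, ((V.filter (fun v => (t:ℤ) < v.1 + |v.2|)).card : ℤ)
        = ∑ v ∈ V, (if (t:ℤ) < v.1 + |v.2| then (1:ℤ) else 0) := by
      intro t _
      rw [Finset.sum_ite, Finset.sum_const, Finset.sum_const]
      simp
    rw [Finset.sum_congr rfl e1, Finset.sum_comm]
    apply Finset.sum_le_sum
    intro v hv
    have hnorm : (1:ℤ) ≤ v.1 + |v.2| := le_add_of_le_of_nonneg (h1 v hv) (abs_nonneg _)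
    calc ∑ t ∈ Finset.range T, (if (t:ℤ) < v.1 + |v.2| then (1:ℤ) else 0)
        ≤ ∑ t ∈ Finset.range T, (if (t:ℤ) < v.1 + |v.2| then (1:ℤ) else 0) := le_refl _
      _ ≤ v.1 + |v.2| := by
          rw [Finset.sum_ite, Finset.sum_const, Finset.sum_const]
          simp only [nsmul_eq_mul, mul_one, mul_zero, add_zero, smul_zero]
          have hsub : (Finset.range T).filter (fun t : ℕ => (t:ℤ) < v.1 + |v.2|)
              ⊆ Finset.range (v.1 + |v.2|).toNat := by
            intro t ht
            simp only [Finset.mem_filter, Finset.mem_range] at ht ⊢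
            omega
          have := Finset.card_le_card hsub
          rw [Finset.card_range] at this
          calc (((Finset.range T).filter (fun t : ℕ => (t:ℤ) < v.1 + |v.2|)).card : ℤ)
              ≤ ((v.1 + |v.2|).toNat : ℤ) := by exact_mod_cast this
            _ = v.1 + |v.2| := Int.toNat_of_nonneg (by omega)
  calc (T:ℤ) * V.card = ∑ t ∈ Finset.range T, ((V.card:ℤ)) := by
        rw [Finset.sum_const]; simp [mul_comm]
    _ = ∑ t ∈ Finset.range T, (((V.card:ℤ) - (t:ℤ)^2) + (t:ℤ)^2) := by
        apply Finset.sum_congr rfl; intro t _; ring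
    _ = (∑ t ∈ Finset.range T, ((V.card:ℤ) - (t:ℤ)^2)) + ∑ t ∈ Finset.range T, (t:ℤ)^2 := by
        rw [Finset.sum_add_distrib]
    _ ≤ (∑ t ∈ Finset.range T, ((V.filter (fun v => (t:ℤ) < v.1 + |v.2|)).card : ℤ))
          + ∑ t ∈ Finset.range T, (t:ℤ)^2 := by
        gcongr with t ht
        exact key t
    _ ≤ (∑ v ∈ V, (v.1 + |v.2|)) + ∑ t ∈ Finset.range T, (t:ℤ)^2 := by gcongr

lemma ball_count' : True := trivial

lemma downward_closed_eq_range (N : ℕ) (S : Finset ℕ) (hsub : S ⊆ Finset.range N)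
    (hdc : ∀ m' ∈ S, ∀ m < m', m ∈ S) : S = Finset.range S.card := by
  by_cases hS : S.Nonempty
  · have key : S = Finset.range (S.max' hS + 1) := by
      ext m
      simp only [Finset.mem_range]
      constructor
      · intro hm
        exact Nat.lt_succ_of_le (S.le_max' m hm)
      · intro hm
        rcases Nat.lt_succ_iff_lt_or_eq.1 hm with h | h
        · exact hdc _ (S.max'_mem hS) m h
        · rw [h]; exact S.max'_mem hS
    rw [key, Finset.card_range]
  · rw [Finset.not_nonempty_iff_eq_empty] at hS
    simp [hS]

lemma sum_sq_104 : ∑ t ∈ Finset.range 104, (t:ℤ)^2 = 369564 := by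
  norm_num [Finset.sum_range_succ]

/-- Points of a `k × k` natural grid with distinct first coordinates and strictly
increasing chord slopes number at most about `k^{2/3}`. -/
lemma arc_count (k : ℕ) (P : Finset (ℕ × ℕ))
    (hrange : ∀ p ∈ P, p.1 < k ∧ p.2 < k)
    (hinj : ∀ p ∈ P, ∀ q ∈ P, p.1 = q.1 → p = q)
    (hslope : ∀ p ∈ P, ∀ q ∈ P, ∀ r ∈ P, p.1 < q.1 → q.1 < r.1 →
      ((q.2:ℤ) - (p.2:ℤ)) * ((r.1:ℤ) - (q.1:ℤ)) < ((r.2:ℤ) - (q.2:ℤ)) * ((q.1:ℤ) - (p.1:ℤ))) :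
    104 * (P.card : ℤ) ≤ 3 * k + 369668 := by
  set n := P.card with hn
  by_cases hn2 : n ≤ 1
  · have : (0:ℤ) ≤ 3 * k := by positivity
    omega
  push_neg at hn2
  have hk1 : 1 ≤ k := by
    obtain ⟨p, hp⟩ := Finset.card_pos.1 (by omega : 0 < P.card)
    exact Nat.one_le_iff_ne_zero.2 (by intro h; exact absurd (hrange p hp).1 (by omega))
  -- the set of first coordinates
  have hfstinj : Set.InjOn Prod.fst (P : Set (ℕ × ℕ)) := by
    intro p hp q hq hpq
    exact hinj p hp q hq hpq
  set I := P.image Prod.fst with hI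
  have hIcard : I.card = n := by
    rw [hI, Finset.card_image_of_injOn hfstinj]
  set e := I.orderIsoOfFin hIcard with he
  set X : ℕ → ℕ := fun m => (e ⟨min m (n-1), by omega⟩ : ℕ) with hX
  have hXmono : ∀ m m' : ℕ, m < m' → m' ≤ n - 1 → X m < X m' := by
    intro m m' hmm' hm'
    have : (⟨min m (n-1), by omega⟩ : Fin n) < ⟨min m' (n-1), by omega⟩ := by
      simp only [Fin.mk_lt_mk]
      omega
    have := e.strictMono this
    exact this
  have hXI : ∀ m, X m ∈ I := fun m => (e _).2
  have hex : ∀ m : ℕ, ∃ p, p ∈ P ∧ p.1 = X m := by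
    intro m
    obtain ⟨p, hp, hpx⟩ := Finset.mem_image.1 (hXI m)
    exact ⟨p, hp, hpx⟩
  choose pt hptP hptX using hex
  set Y : ℕ → ℕ := fun m => (pt m).2 with hY
  have hXk : ∀ m, X m < k := fun m => by
    rw [← hptX m]; exact (hrange _ (hptP m)).1
  have hYk : ∀ m, Y m < k := fun m => (hrange _ (hptP m)).2
  set N := n - 1 with hN
  -- slopes
  set s : ℕ → ℚ := fun m => ((Y (m+1) : ℚ) - (Y m : ℚ)) / ((X (m+1) : ℚ) - (X m : ℚ)) with hs
  have hdenpos : ∀ m < N, (0:ℚ) < (X (m+1) : ℚ) - (X m : ℚ) := by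
    intro m hm
    have := hXmono m (m+1) (by omega) (by omega)
    have : (X m : ℚ) < X (m+1) := by exact_mod_cast this
    linarith
  have hcons : ∀ m, m + 1 < N → s m < s (m+1) := by
    intro m hm
    have h1 : X m < X (m+1) := hXmono m (m+1) (by omega) (by omega)
    have h2 : X (m+1) < X (m+2) := hXmono (m+1) (m+2) (by omega) (by omega)
    have hsl := hslope (pt m) (hptP m) (pt (m+1)) (hptP (m+1)) (pt (m+2)) (hptP (m+2))
      (by rw [hptX m, hptX (m+1)]; exact h1) (by rw [hptX (m+1), hptX (m+2)]; exact h2)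
    rw [hptX m, hptX (m+1), hptX (m+2)] at hsl
    rw [hs]
    rw [div_lt_div_iff₀ (hdenpos m (by omega)) (hdenpos (m+1) (by omega))]
    have : (((Y (m+1) : ℤ) - (Y m : ℤ)) * ((X (m+2):ℤ) - (X (m+1):ℤ)) : ℚ)
        < (((Y (m+2) : ℤ) - (Y (m+1) : ℤ)) * ((X (m+1):ℤ) - (X m:ℤ)) : ℚ) := by
      exact_mod_cast hsl
    push_cast at this ⊢
    linarith
  have hmono : ∀ m', m' < N → ∀ m, m < m' → s m < s m' := by
    intro m'
    induction m' with
    | zero => intro _ m hm; omega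
    | succ M ih =>
      intro hM' m hm
      have hstep : s M < s (M+1) := hcons M hM'
      rcases Nat.lt_succ_iff_lt_or_eq.1 hm with h | h
      · exact (ih (by omega) m h).trans hstep
      · rw [h]; exact hstep
  -- difference vectors
  set v : ℕ → ℤ × ℤ := fun m => ((X (m+1) : ℤ) - (X m : ℤ), (Y (m+1) : ℤ) - (Y m : ℤ)) with hv
  have hdx1 : ∀ m < N, 1 ≤ (v m).1 := by
    intro m hm
    have := hXmono m (m+1) (by omega) (by omega)
    simp only [hv]
    omega
  have hseq : ∀ m < N, s m = ((v m).2 : ℚ) / ((v m).1 : ℚ) := by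
    intro m hm
    simp only [hs, hv]
    push_cast
    ring_nf
  have hvinj : Set.InjOn v (Finset.range N : Set ℕ) := by
    intro m hm m' hm' heq
    simp only [Finset.coe_range, Set.mem_Iio] at hm hm'
    by_contra hne
    rcases Nat.lt_or_ge m m' with h | h
    · have := hmono m' hm' m h
      rw [hseq m (by omega), hseq m' (by omega), heq] at this
      exact lt_irrefl _ this
    · have hlt : m' < m := by omega
      have := hmono m hm m' hlt
      rw [hseq m (by omega), hseq m' (by omega), heq] at this
      exact lt_irrefl _ this
  set V : Finset (ℤ × ℤ) := (Finset.range N).image v with hV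
  have hVcard : V.card = N := by
    rw [hV, Finset.card_image_of_injOn hvinj, Finset.card_range]
  have hV1 : ∀ w ∈ V, 1 ≤ w.1 := by
    intro w hw
    obtain ⟨m, hm, rfl⟩ := Finset.mem_image.1 hw
    exact hdx1 m (Finset.mem_range.1 hm)
  -- sum of dx
  have hsumdx : ∑ m ∈ Finset.range N, (v m).1 ≤ (k:ℤ) - 1 := by
    have : ∑ m ∈ Finset.range N, (v m).1 = (X N : ℤ) - (X 0 : ℤ) :=
      Finset.sum_range_sub (fun m => (X m : ℤ)) N
    rw [this]
    have := hXk N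
    omega
  -- sum of |dy|
  set S : Finset ℕ := (Finset.range N).filter (fun m => (v m).2 < 0) with hSdef
  have hdc : ∀ m' ∈ S, ∀ m < m', m ∈ S := by
    intro m' hm' m hm
    simp only [hSdef, Finset.mem_filter, Finset.mem_range] at hm' ⊢
    obtain ⟨hm'N, hdy'⟩ := hm'
    refine ⟨by omega, ?_⟩
    have hsneg : s m' < 0 := by
      rw [hseq m' hm'N]
      apply div_neg_of_neg_of_pos
      · exact Int.cast_lt_zero.mpr hdy'
      · have := hdx1 m' hm'N
        have : (0:ℤ) < (v m').1 := by omega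
        exact_mod_cast this
    have := (hmono m' hm'N m hm).trans hsneg
    rw [hseq m (by omega)] at this
    by_contra hcon
    push_neg at hcon
    have hp1 : (0:ℚ) ≤ ((v m).2 : ℚ) := by exact_mod_cast hcon
    have hp2 : (0:ℚ) < ((v m).1 : ℚ) := by
      have h5 := hdx1 m (by omega)
      exact Int.cast_pos.mpr (by omega)
    have := div_nonneg hp1 hp2.le
    linarith
  have hSrange := downward_closed_eq_range N S (Finset.filter_subset _ _) hdc
  set M₀ := S.card with hM₀
  have hM₀N : M₀ ≤ N := by
    rw [hM₀]
    calc S.card ≤ (Finset.range N).card := Finset.card_le_card (Finset.filter_subset _ _)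
      _ = N := Finset.card_range N
  have hsumS : ∑ m ∈ S, (-(v m).2) = (Y 0 : ℤ) - (Y M₀ : ℤ) := by
    rw [hSrange]
    have : ∀ m, -(v m).2 = (fun m => (Y m : ℤ)) m - (fun m => (Y m : ℤ)) (m+1) := by
      intro m; simp only [hv]; ring
    rw [Finset.sum_congr rfl (fun m _ => this m)]
    exact Finset.sum_range_sub' (fun m => (Y m : ℤ)) M₀
  have hsumtot : ∑ m ∈ Finset.range N, (v m).2 = (Y N : ℤ) - (Y 0 : ℤ) :=
    Finset.sum_range_sub (fun m => (Y m : ℤ)) N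
  have habs : ∑ m ∈ Finset.range N, |(v m).2| ≤ 2 * ((k:ℤ) - 1) := by
    have hsplit : ∑ m ∈ Finset.range N, |(v m).2|
        = ∑ m ∈ S, |(v m).2| + ∑ m ∈ (Finset.range N).filter (fun m => ¬ ((v m).2 < 0)), |(v m).2| := by
      rw [hSdef]
      exact (Finset.sum_filter_add_sum_filter_not _ _ _).symm
    have h1 : ∑ m ∈ S, |(v m).2| = ∑ m ∈ S, (-(v m).2) := by
      apply Finset.sum_congr rfl
      intro m hm
      simp only [hSdef, Finset.mem_filter] at hm
      exact abs_of_neg hm.2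
    have h2 : ∑ m ∈ (Finset.range N).filter (fun m => ¬ ((v m).2 < 0)), |(v m).2|
        = ∑ m ∈ (Finset.range N).filter (fun m => ¬ ((v m).2 < 0)), (v m).2 := by
      apply Finset.sum_congr rfl
      intro m hm
      simp only [Finset.mem_filter, not_lt] at hm
      exact abs_of_nonneg hm.2
    have h3 : ∑ m ∈ (Finset.range N).filter (fun m => ¬ ((v m).2 < 0)), (v m).2
        = (∑ m ∈ Finset.range N, (v m).2) - ∑ m ∈ S, (v m).2 := by
      rw [hSdef]
      rw [← Finset.sum_filter_add_sum_filter_not (Finset.range N) (fun m => (v m).2 < 0) (fun m => (v m).2)]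
      ring
    have hS2 : ∑ m ∈ S, (v m).2 = -((Y 0 : ℤ) - (Y M₀ : ℤ)) := by
      have : ∑ m ∈ S, (v m).2 = -∑ m ∈ S, (-(v m).2) := by
        rw [← Finset.sum_neg_distrib]
        apply Finset.sum_congr rfl
        intro m _; ring
      rw [this, hsumS]
    rw [hsplit, h1, h2, h3, hsumS, hsumtot, hS2]
    have := hYk 0
    have := hYk N
    have := hYk M₀
    have : (0:ℤ) ≤ (Y M₀ : ℤ) := by positivity
    have h0k : (Y 0 : ℤ) ≤ (k:ℤ) - 1 := by exact_mod_cast Nat.le_sub_one_of_lt (hYk 0)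
    have hNk : (Y N : ℤ) ≤ (k:ℤ) - 1 := by exact_mod_cast Nat.le_sub_one_of_lt (hYk N)
    linarith
  -- total norm sum
  have hnorm : ∑ w ∈ V, (w.1 + |w.2|) ≤ 3 * (k:ℤ) - 3 := by
    rw [hV, Finset.sum_image (fun x hx y hy h => hvinj hx hy h)]
    have : ∑ m ∈ Finset.range N, ((v m).1 + |(v m).2|)
        = (∑ m ∈ Finset.range N, (v m).1) + ∑ m ∈ Finset.range N, |(v m).2| :=
      Finset.sum_add_distrib
    rw [this]
    linarith
  have hlayer := layered_count V hV1 104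
  rw [hVcard, sum_sq_104] at hlayer
  have hNn : (N : ℤ) = (n : ℤ) - 1 := by
    rw [hN]
    have : (1:ℕ) ≤ n := by omega
    push_cast [Nat.cast_sub this]
    ring
  rw [hNn] at hlayer
  push_cast at hlayer
  have hkz : (1:ℤ) ≤ (k:ℤ) := by exact_mod_cast hk1
  linarith


lemma branch_deriv2_aux (Q Q1 Q2 : ℝ → ℝ) (c₀ p₀ q₀ : ℝ)
    (hQd : ∀ x, HasDerivAt Q (Q1 x) x) (hQd1 : ∀ x, HasDerivAt Q1 (Q2 x) x)
    {x : ℝ} (hx : 0 < Q x) :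
    deriv^[2] (fun x => c₀ * Real.sqrt (Q x) + p₀*x + q₀) x
      = c₀ * (2*Q x*Q2 x - Q1 x^2) / (4 * Q x * Real.sqrt (Q x)) := by
  have hQc : Continuous Q := by
    rw [continuous_iff_continuousAt]; exact fun y => (hQd y).continuousAt
  set U : Set ℝ := {y | 0 < Q y} with hU
  have hUopen : IsOpen U := isOpen_lt continuous_const hQc
  have hxU : x ∈ U := hx
  set F : ℝ → ℝ := fun x => c₀ * Real.sqrt (Q x) + p₀*x + q₀ with hF
  set F1 : ℝ → ℝ := fun x => c₀ * (Q1 x / (2 * Real.sqrt (Q x))) + p₀ with hF1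
  have hderiv : ∀ y ∈ U, HasDerivAt F (F1 y) y := by
    intro y hy
    have hQy : (0:ℝ) < Q y := hy
    have hs : HasDerivAt (fun z => Real.sqrt (Q z)) (Q1 y / (2 * Real.sqrt (Q y))) y := by
      have := (Real.hasDerivAt_sqrt (ne_of_gt hQy)).comp y (hQd y)
      refine this.congr_deriv ?_
      ring
    have : HasDerivAt (fun z => c₀ * Real.sqrt (Q z) + p₀*z + q₀)
        (c₀ * (Q1 y / (2 * Real.sqrt (Q y))) + p₀) y := by
      exact ((hs.const_mul c₀).add ((hasDerivAt_id y).const_mul p₀)).add_const q₀ |>.congr_deriv (by ring)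
    exact this
  have hd1 : deriv F =ᶠ[nhds x] F1 := by
    filter_upwards [hUopen.mem_nhds hxU] with y hy
    exact (hderiv y hy).deriv
  have hF1d : HasDerivAt F1 (c₀ * (2*Q x*Q2 x - Q1 x^2) / (4 * Q x * Real.sqrt (Q x))) x := by
    have hsx : (0:ℝ) < Real.sqrt (Q x) := Real.sqrt_pos.2 hx
    have hs : HasDerivAt (fun z => Real.sqrt (Q z)) (Q1 x / (2 * Real.sqrt (Q x))) x := by
      have := (Real.hasDerivAt_sqrt (ne_of_gt hx)).comp x (hQd x)
      refine this.congr_deriv ?_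
      ring
    have hden : HasDerivAt (fun z => 2 * Real.sqrt (Q z)) (2 * (Q1 x / (2 * Real.sqrt (Q x)))) x :=
      hs.const_mul 2
    have hne : 2 * Real.sqrt (Q x) ≠ 0 := by positivity
    have hdiv := (hQd1 x).div hden hne
    have : HasDerivAt (fun z => c₀ * (Q1 z / (2 * Real.sqrt (Q z))) + p₀)
        (c₀ * ((Q2 x * (2 * Real.sqrt (Q x)) - Q1 x * (2 * (Q1 x / (2 * Real.sqrt (Q x))))) /
          (2 * Real.sqrt (Q x))^2)) x := (hdiv.const_mul c₀).add_const p₀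
    convert this using 1
    have hQeq : Real.sqrt (Q x) * Real.sqrt (Q x) = Q x := Real.mul_self_sqrt hx.le
    have h3 : Real.sqrt (Q x)^3 = Q x * Real.sqrt (Q x) := by
      rw [pow_succ, Real.sq_sqrt hx.le]
    field_simp
    ring_nf
    rw [Real.sq_sqrt hx.le]
    ring
  have : deriv (deriv F) x = deriv F1 x := hd1.deriv_eq
  simp only [Function.iterate_succ, Function.iterate_zero, Function.comp, id_eq]
  rw [this, hF1d.deriv]

lemma branch_convex_or_concave (Q Q1 Q2 : ℝ → ℝ) (c₀ p₀ q₀ : ℝ) (hc : c₀ ≠ 0)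
    (hQd : ∀ x, HasDerivAt Q (Q1 x) x) (hQd1 : ∀ x, HasDerivAt Q1 (Q2 x) x)
    (m M : ℝ)
    (hQpos : ∀ x ∈ Icc m M, 0 < Q x)
    (hh : (∀ x ∈ Icc m M, 0 < 2*Q x*Q2 x - Q1 x^2) ∨ (∀ x ∈ Icc m M, 2*Q x*Q2 x - Q1 x^2 < 0)) :
    StrictConvexOn ℝ (Icc m M) (fun x => c₀ * Real.sqrt (Q x) + p₀*x + q₀)
      ∨ StrictConcaveOn ℝ (Icc m M) (fun x => c₀ * Real.sqrt (Q x) + p₀*x + q₀) := by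
  have hQc : Continuous Q := by
    rw [continuous_iff_continuousAt]; exact fun y => (hQd y).continuousAt
  have hFc : ContinuousOn (fun x => c₀ * Real.sqrt (Q x) + p₀*x + q₀) (Icc m M) := by
    apply Continuous.continuousOn
    fun_prop
  have key : ∀ x ∈ interior (Icc m M),
      deriv^[2] (fun x => c₀ * Real.sqrt (Q x) + p₀*x + q₀) x
        = c₀ * (2*Q x*Q2 x - Q1 x^2) / (4 * Q x * Real.sqrt (Q x)) := fun x hx =>
    branch_deriv2_aux Q Q1 Q2 c₀ p₀ q₀ hQd hQd1 (hQpos x (interior_subset hx))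
  rcases lt_or_gt_of_ne hc with hcneg | hcpos
  · rcases hh with hpos | hneg
    · right
      apply strictConcaveOn_of_deriv2_neg (convex_Icc m M) hFc
      intro x hx
      rw [key x hx]
      have h1 := hQpos x (interior_subset hx)
      have h2 := hpos x (interior_subset hx)
      have h3 : (0:ℝ) < Real.sqrt (Q x) := Real.sqrt_pos.2 h1
      have : (0:ℝ) < 4 * Q x * Real.sqrt (Q x) := by positivity
      exact div_neg_of_neg_of_pos (mul_neg_of_neg_of_pos hcneg h2) this
    · left
      apply strictConvexOn_of_deriv2_pos (convex_Icc m M) hFc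
      intro x hx
      rw [key x hx]
      have h1 := hQpos x (interior_subset hx)
      have h2 := hneg x (interior_subset hx)
      have h3 : (0:ℝ) < Real.sqrt (Q x) := Real.sqrt_pos.2 h1
      have : (0:ℝ) < 4 * Q x * Real.sqrt (Q x) := by positivity
      exact div_pos (mul_pos_of_neg_of_neg hcneg h2) this
  · rcases hh with hpos | hneg
    · left
      apply strictConvexOn_of_deriv2_pos (convex_Icc m M) hFc
      intro x hx
      rw [key x hx]
      have h1 := hQpos x (interior_subset hx)
      have h2 := hpos x (interior_subset hx)
      have h3 : (0:ℝ) < Real.sqrt (Q x) := Real.sqrt_pos.2 h1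
      have : (0:ℝ) < 4 * Q x * Real.sqrt (Q x) := by positivity
      exact div_pos (mul_pos hcpos h2) this
    · right
      apply strictConcaveOn_of_deriv2_neg (convex_Icc m M) hFc
      intro x hx
      rw [key x hx]
      have h1 := hQpos x (interior_subset hx)
      have h2 := hneg x (interior_subset hx)
      have h3 : (0:ℝ) < Real.sqrt (Q x) := Real.sqrt_pos.2 h1
      have : (0:ℝ) < 4 * Q x * Real.sqrt (Q x) := by positivity
      exact div_neg_of_neg_of_pos (mul_neg_of_pos_of_neg hcpos h2) this



lemma sign_const (f : ℝ → ℝ) (hf : Continuous f) (A B : ℝ) (hAB : A ≤ B)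
    (hne : ∀ x ∈ Set.Icc A B, f x ≠ 0) :
    (∀ x ∈ Set.Icc A B, 0 < f x) ∨ (∀ x ∈ Set.Icc A B, f x < 0) := by
  by_contra hcon
  push_neg at hcon
  obtain ⟨⟨x₁, hx₁, h₁⟩, ⟨x₂, hx₂, h₂⟩⟩ := hcon
  have h₁' : f x₁ < 0 := lt_of_le_of_ne h₁ (hne x₁ hx₁)
  have h₂' : 0 < f x₂ := lt_of_le_of_ne (by linarith) (Ne.symm (hne x₂ hx₂))
  have hsub : Set.uIcc x₁ x₂ ⊆ Set.Icc A B := by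
    intro z hz
    rw [Set.mem_uIcc] at hz
    rcases hz with ⟨hz1, hz2⟩ | ⟨hz1, hz2⟩
    · exact ⟨(hx₁.1).trans hz1, hz2.trans hx₂.2⟩
    · exact ⟨(hx₂.1).trans hz1, hz2.trans hx₁.2⟩
  have hivt := intermediate_value_uIcc (hf.continuousOn : ContinuousOn f (Set.uIcc x₁ x₂))
  have h0 : (0:ℝ) ∈ Set.uIcc (f x₁) (f x₂) := by
    rw [Set.mem_uIcc]
    left; exact ⟨h₁'.le, h₂'.le⟩
  obtain ⟨z, hz, hz0⟩ := hivt h0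
  exact hne z (hsub hz) hz0




set_option maxHeartbeats 2000000 in
open scoped Classical in
lemma cubic_grid_main (α β γ δ c₂ c₁ c₀' : ℝ) (hα : α ≠ 0) (hc₂ : c₂ ≠ 0)
    (k : ℕ) (T : Finset (ℕ × ℕ))
    (hTsub : T ⊆ Finset.range k ×ˢ Finset.range k)
    (hT : ∀ p ∈ T, (c₂ * (p.2:ℝ) + c₁ * (p.1:ℝ) + c₀')^2
        = α * (p.1:ℝ)^3 + β * (p.1:ℝ)^2 + γ * (p.1:ℝ) + δ) :
    104 * (T.card : ℤ) ≤ 48 * (k:ℤ) + 5919160 := by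
  set Qf : ℝ → ℝ := fun u => α*u^3+β*u^2+γ*u+δ with hQf
  set Q1f : ℝ → ℝ := fun u => 3*α*u^2+2*β*u+γ with hQ1f
  set Q2f : ℝ → ℝ := fun u => 6*α*u+2*β with hQ2f
  have hQd : ∀ x, HasDerivAt Qf (Q1f x) x := by
    intro x
    have h1 : HasDerivAt (fun u : ℝ => α*u^3) (α*(3*x^2)) x := by
      simpa using ((hasDerivAt_pow 3 x).const_mul α)
    have h2 : HasDerivAt (fun u : ℝ => β*u^2) (β*(2*x)) x := by
      simpa using ((hasDerivAt_pow 2 x).const_mul β)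
    have h3 : HasDerivAt (fun u : ℝ => γ*u) γ x := by
      simpa using ((hasDerivAt_id x).const_mul γ)
    have h4 := ((h1.add h2).add h3).add_const δ
    refine h4.congr_deriv ?_
    simp only [hQ1f]
    ring
  have hQd1 : ∀ x, HasDerivAt Q1f (Q2f x) x := by
    intro x
    have h1 : HasDerivAt (fun u : ℝ => 3*α*u^2) (3*α*(2*x)) x := by
      simpa using ((hasDerivAt_pow 2 x).const_mul (3*α))
    have h2 : HasDerivAt (fun u : ℝ => 2*β*u) (2*β) x := by
      simpa using ((hasDerivAt_id x).const_mul (2*β))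
    have h4 := (h1.add h2).add_const γ
    refine h4.congr_deriv ?_
    simp only [hQ2f]
    ring
  have hQcont : Continuous Qf := by fun_prop
  set hf : ℝ → ℝ := fun u => 2*Qf u*Q2f u - Q1f u^2 with hhf
  have hhcont : Continuous hf := by
    simp only [hhf]
    fun_prop
  -- polynomials and the root set
  set Pq : ℝ[X] := C α*X^3 + C β*X^2 + C γ*X + C δ with hPq
  set Ph : ℝ[X] := C (3*α^2)*X^4 + C (4*α*β)*X^3 + C (6*α*γ)*X^2 + C (12*α*δ)*X
      + C (4*β*δ - γ^2) with hPh
  have hPqeval : ∀ x : ℝ, Pq.eval x = Qf x := by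
    intro x; simp [hPq, hQf]
  have hPheval : ∀ x : ℝ, Ph.eval x = hf x := by
    intro x
    simp only [hPh, hhf, hQf, hQ1f, hQ2f, eval_add, eval_mul, eval_pow, eval_C, eval_X]
    ring
  have hPq0 : Pq ≠ 0 := by
    have hco : Pq.coeff 3 = α := by
      simp only [hPq, coeff_add, coeff_C_mul, coeff_X_pow, coeff_C, coeff_X]
      norm_num
    intro h0
    rw [h0, coeff_zero] at hco
    exact hα hco.symm
  have hPh0 : Ph ≠ 0 := by
    have hco : Ph.coeff 4 = 3*α^2 := by
      simp only [hPh, coeff_add, coeff_C_mul, coeff_X_pow, coeff_C, coeff_X]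
      norm_num
    intro h0
    rw [h0, coeff_zero] at hco
    have hα2 : α^2 = 0 := by linarith
    exact hα ((pow_eq_zero_iff (two_ne_zero)).1 hα2)
  have hPqdeg : Pq.natDegree ≤ 3 := by
    simp only [hPq]
    compute_degree
  have hPhdeg : Ph.natDegree ≤ 4 := by
    simp only [hPh]
    compute_degree
  set Zst : Finset ℝ := (Pq*Ph).roots.toFinset with hZst
  have hZcard : Zst.card ≤ 7 := by
    calc Zst.card ≤ Multiset.card (Pq*Ph).roots := (Pq*Ph).roots.toFinset_card_le
      _ ≤ (Pq*Ph).natDegree := card_roots' _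
      _ = Pq.natDegree + Ph.natDegree := natDegree_mul hPq0 hPh0
      _ ≤ 7 := by omega
  have hZiff : ∀ x : ℝ, x ∈ Zst ↔ (Qf x = 0 ∨ hf x = 0) := by
    intro x
    rw [hZst, Multiset.mem_toFinset, mem_roots (mul_ne_zero hPq0 hPh0)]
    unfold IsRoot
    rw [eval_mul, mul_eq_zero, hPqeval, hPheval]
  -- W and sign
  set W : ℕ × ℕ → ℝ := fun p => c₂ * (p.2:ℝ) + c₁ * (p.1:ℝ) + c₀' with hW
  have hWsq : ∀ p ∈ T, (W p)^2 = Qf (p.1:ℝ) := by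
    intro p hp
    simp only [hW, hQf]
    exact hT p hp
  set sgn : ℕ × ℕ → Bool := fun p => decide (0 ≤ W p) with hsgn
  -- bad and good points
  set bad : Finset (ℕ × ℕ) := T.filter (fun p => (p.1:ℝ) ∈ Zst) with hbaddef
  set good : Finset (ℕ × ℕ) := T.filter (fun p => ¬ ((p.1:ℝ) ∈ Zst)) with hgooddef
  have hsplitcard : bad.card + good.card = T.card :=
    Finset.card_filter_add_card_filter_not _
  have hWinj : ∀ p ∈ T, ∀ q ∈ T, p.1 = q.1 → sgn p = sgn q → p = q := by
    intro p hp q hq h1 hsg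
    have hc : (p.1:ℝ) = (q.1:ℝ) := by exact_mod_cast h1
    have hsq : (W p)^2 = (W q)^2 := by rw [hWsq p hp, hWsq q hq, hc]
    have hWeq : W p = W q := by
      have hfact : (W p - W q) * (W p + W q) = 0 := by linear_combination hsq
      rcases mul_eq_zero.1 hfact with h | h
      · linarith
      · by_cases hb : 0 ≤ W p
        · have hbq : (0:ℝ) ≤ W q := by
            have : sgn q = true := by rw [← hsg, hsgn]; simp [hb]
            simp only [hsgn, decide_eq_true_eq] at this
            exact this
          have : W p = 0 := by linarith
          have : W q = 0 := by linarith
          linarith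
        · push_neg at hb
          have hbq : ¬ (0 ≤ W q) := by
            have : sgn q = false := by rw [← hsg, hsgn]; simp [not_le.2 hb]
            simp only [hsgn, decide_eq_false_iff_not] at this
            exact this
          push_neg at hbq
          linarith
    have h2 : (p.2:ℝ) = (q.2:ℝ) := by
      have : c₂ * (p.2:ℝ) = c₂ * (q.2:ℝ) := by
        simp only [hW] at hWeq
        rw [hc] at hWeq
        linarith
      exact mul_left_cancel₀ hc₂ this
    exact Prod.ext h1 (by exact_mod_cast h2)
  have hbadcard : bad.card ≤ 14 := by
    have : bad.card ≤ (Zst ×ˢ (Finset.univ : Finset Bool)).card := by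
      apply Finset.card_le_card_of_injOn (fun p => ((p.1:ℝ), sgn p))
      · intro p hp
        simp only [hbaddef, Finset.mem_coe, Finset.mem_filter] at hp
        simp only [Finset.mem_coe, Finset.mem_product, Finset.mem_univ, and_true]
        exact hp.2
      · intro p hp q hq heq
        simp only [hbaddef, Finset.coe_filter, Set.mem_setOf_eq] at hp hq
        have h1 : (p.1:ℝ) = (q.1:ℝ) := congrArg Prod.fst heq
        have h2 : sgn p = sgn q := congrArg Prod.snd heq
        exact hWinj p hp.1 q hq.1 (by exact_mod_cast h1) h2
    rw [Finset.card_product] at this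
    simp only [Finset.card_univ, Fintype.card_bool] at this
    omega
  -- pigeonhole into 16 classes
  set cls : ℕ × ℕ → Bool × ℕ :=
      fun p => (sgn p, (Zst.filter (fun z => z < (p.1:ℝ))).card) with hcls
  have hmaps : ∀ p ∈ good, cls p ∈ (Finset.univ : Finset Bool) ×ˢ Finset.range (Zst.card + 1) := by
    intro p _
    simp only [Finset.mem_product, Finset.mem_univ, true_and, Finset.mem_range, hcls]
    have := Finset.card_le_card (Finset.filter_subset (fun z => z < (p.1:ℝ)) Zst)
    omega
  obtain ⟨yc, hyc, hfib⟩ := Finset.exists_le_card_fiber_of_mul_le_card_of_maps_to hmaps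
    ⟨(true, 0), by simp⟩
    (show ((Finset.univ : Finset Bool) ×ˢ Finset.range (Zst.card + 1)).card * (good.card / 16)
        ≤ good.card by
      rw [Finset.card_product, Finset.card_univ, Fintype.card_bool, Finset.card_range]
      calc 2 * (Zst.card + 1) * (good.card / 16) ≤ 16 * (good.card / 16) := by
            have : 2 * (Zst.card + 1) ≤ 16 := by omega
            exact Nat.mul_le_mul_right _ this
        _ ≤ good.card := Nat.mul_div_le _ _)
  set Cc : Finset (ℕ × ℕ) := good.filter (fun p => cls p = yc) with hCc
  have hCgood : Cc ⊆ good := Finset.filter_subset _ _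
  have hCT : Cc ⊆ T := hCgood.trans (Finset.filter_subset _ _)
  have hCrange : ∀ p ∈ Cc, p.1 < k ∧ p.2 < k := by
    intro p hp
    have := hTsub (hCT hp)
    simp only [Finset.mem_product, Finset.mem_range] at this
    exact this
  -- the key bound on the class
  have hclassbd : 104 * (Cc.card : ℤ) ≤ 3 * k + 369668 := by
    rcases Cc.eq_empty_or_nonempty with hE | hNE
    · rw [hE]
      simp
      positivity
    -- setup interval
    obtain ⟨p₀, hp₀⟩ := hNE
    have hCgoodmem : ∀ p ∈ Cc, (p.1:ℝ) ∉ Zst := by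
      intro p hp
      have := hCgood hp
      simp only [hgooddef, Finset.mem_filter] at this
      exact this.2
    have hCsgn : ∀ p ∈ Cc, sgn p = yc.1 := by
      intro p hp
      simp only [hCc, Finset.mem_filter] at hp
      rw [← hp.2]
    have hCcnt : ∀ p ∈ Cc, (Zst.filter (fun z => z < (p.1:ℝ))).card = yc.2 := by
      intro p hp
      simp only [hCc, Finset.mem_filter] at hp
      rw [← hp.2]
    set R : Finset ℝ := Cc.image (fun p => (p.1:ℝ)) with hR
    have hRne : R.Nonempty := ⟨(p₀.1 : ℝ), Finset.mem_image_of_mem _ hp₀⟩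
    set rmin := R.min' hRne with hrmin
    set rmax := R.max' hRne with hrmax
    have hminmax : rmin ≤ rmax := R.min'_le _ (R.max'_mem hRne)
    have hRIcc : ∀ p ∈ Cc, (p.1:ℝ) ∈ Set.Icc rmin rmax := by
      intro p hp
      have hmem : (p.1:ℝ) ∈ R := Finset.mem_image_of_mem _ hp
      exact ⟨R.min'_le _ hmem, R.le_max' _ hmem⟩
    obtain ⟨pmin, hpminC, hpmin⟩ := Finset.mem_image.1 (R.min'_mem hRne)
    obtain ⟨pmax, hpmaxC, hpmax⟩ := Finset.mem_image.1 (R.max'_mem hRne)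
    rw [← hrmin] at hpmin
    rw [← hrmax] at hpmax
    have hnoroot : ∀ x ∈ Set.Icc rmin rmax, x ∉ Zst := by
      intro x hx hxZ
      have hx1 : x ≠ rmin := by
        intro h; rw [h, ← hpmin] at hxZ; exact hCgoodmem pmin hpminC hxZ
      have hx2 : x ≠ rmax := by
        intro h; rw [h, ← hpmax] at hxZ; exact hCgoodmem pmax hpmaxC hxZ
      have hlt1 : rmin < x := lt_of_le_of_ne hx.1 (Ne.symm hx1)
      have hlt2 : x < rmax := lt_of_le_of_ne hx.2 hx2
      have hssub : Zst.filter (fun z => z < rmin) ⊂ Zst.filter (fun z => z < rmax) := by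
        constructor
        · intro z hz
          simp only [Finset.mem_filter] at hz ⊢
          exact ⟨hz.1, lt_of_lt_of_le hz.2 hminmax⟩
        · intro hall
          have hxin : x ∈ Zst.filter (fun z => z < rmax) := by
            simp only [Finset.mem_filter]; exact ⟨hxZ, hlt2⟩
          have := hall hxin
          simp only [Finset.mem_filter] at this
          linarith [this.2]
      have hcard := Finset.card_lt_card hssub
      rw [← hpmin] at hcard
      rw [← hpmax] at hcard
      rw [hCcnt pmin hpminC, hCcnt pmax hpmaxC] at hcard
      omega
    have hQnz : ∀ x ∈ Set.Icc rmin rmax, Qf x ≠ 0 := by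
      intro x hx h0
      exact hnoroot x hx ((hZiff x).2 (Or.inl h0))
    have hhnz : ∀ x ∈ Set.Icc rmin rmax, hf x ≠ 0 := by
      intro x hx h0
      exact hnoroot x hx ((hZiff x).2 (Or.inr h0))
    have hQanchor : 0 < Qf (pmin.1 : ℝ) := by
      have hge : 0 ≤ Qf (pmin.1:ℝ) := by
        rw [← hWsq pmin (hCT hpminC)]; positivity
      have hne := hQnz (pmin.1:ℝ) (hRIcc pmin hpminC)
      exact lt_of_le_of_ne hge (Ne.symm hne)
    have hQpos : ∀ x ∈ Set.Icc rmin rmax, 0 < Qf x := by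
      rcases sign_const Qf hQcont rmin rmax hminmax hQnz with h | h
      · exact h
      · exact absurd (h _ (hRIcc pmin hpminC)) (by linarith [hQanchor])
    have hhsign := sign_const hf hhcont rmin rmax hminmax hhnz
    -- branch function
    set σv : ℝ := if yc.1 then 1 else -1 with hσv
    have hσn0 : σv ≠ 0 := by
      by_cases hy : yc.1 <;> simp [hσv, hy]
    set c₀v : ℝ := σv / c₂ with hc₀v
    set p₀v : ℝ := -c₁ / c₂ with hp₀v
    set q₀v : ℝ := -c₀' / c₂ with hq₀v
    have hj : ∀ p ∈ Cc, (p.2:ℝ) = c₀v * Real.sqrt (Qf (p.1:ℝ)) + p₀v * (p.1:ℝ) + q₀v := by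
      intro p hp
      have hsq : (W p)^2 = Qf (p.1:ℝ) := hWsq p (hCT hp)
      have habs : Real.sqrt (Qf (p.1:ℝ)) = |W p| := by
        rw [← hsq, Real.sqrt_sq_eq_abs]
      have hWσ : W p = σv * Real.sqrt (Qf (p.1:ℝ)) := by
        rw [habs, hσv]
        have hsg := hCsgn p hp
        by_cases hy : yc.1 = true
        · rw [hy]
          simp only [if_true, one_mul]
          rw [hy] at hsg
          simp only [hsgn, decide_eq_true_eq] at hsg
          exact (abs_of_nonneg hsg).symm
        · have hyf : yc.1 = false := by revert hy; cases yc.1 <;> simp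
          rw [hyf]
          simp only [Bool.false_eq_true, if_false]
          rw [hyf] at hsg
          simp only [hsgn] at hsg
          have hneg : ¬ (0 ≤ W p) := of_decide_eq_false hsg
          push_neg at hneg
          rw [abs_of_neg hneg]
          ring
      have hWp : c₂ * (p.2:ℝ) + c₁ * (p.1:ℝ) + c₀' = σv * Real.sqrt (Qf (p.1:ℝ)) := by
        rw [← hWσ]
      simp only [hc₀v, hp₀v, hq₀v]
      field_simp
      linear_combination hWp
    -- convexity dichotomy
    have hhsign' : (∀ x ∈ Set.Icc rmin rmax, 0 < 2*Qf x*Q2f x - Q1f x^2)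
        ∨ (∀ x ∈ Set.Icc rmin rmax, 2*Qf x*Q2f x - Q1f x^2 < 0) := by
      rcases hhsign with h | h
      · left; intro x hx; have := h x hx; simpa [hhf] using this
      · right; intro x hx; have := h x hx; simpa [hhf] using this
    have hFcc := branch_convex_or_concave Qf Q1f Q2f c₀v p₀v q₀v
      (div_ne_zero hσn0 hc₂) hQd hQd1 rmin rmax hQpos hhsign'
    have hinjC : ∀ p ∈ Cc, ∀ q ∈ Cc, p.1 = q.1 → p = q := by
      intro p hp q hq h1
      have hc : (p.1:ℝ) = (q.1:ℝ) := by exact_mod_cast h1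
      have : (p.2:ℝ) = (q.2:ℝ) := by rw [hj p hp, hj q hq, hc]
      exact Prod.ext h1 (by exact_mod_cast this)
    rcases hFcc with hconv | hconc
    · -- convex case: apply arc_count to Cc
      have hslopeC : ∀ p ∈ Cc, ∀ q ∈ Cc, ∀ r ∈ Cc, p.1 < q.1 → q.1 < r.1 →
          ((q.2:ℤ) - (p.2:ℤ)) * ((r.1:ℤ) - (q.1:ℤ))
            < ((r.2:ℤ) - (q.2:ℤ)) * ((q.1:ℤ) - (p.1:ℤ)) := by
        intro p hp q hq r hr h1 h2
        have hx : (p.1:ℝ) < (q.1:ℝ) := by exact_mod_cast h1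
        have hy : (q.1:ℝ) < (r.1:ℝ) := by exact_mod_cast h2
        have hsl := hconv.slope_strict_mono_adjacent (hRIcc p hp) (hRIcc r hr) hx hy
        beta_reduce at hsl
        rw [← hj p hp, ← hj q hq, ← hj r hr] at hsl
        rw [div_lt_div_iff₀ (by linarith) (by linarith)] at hsl
        exact_mod_cast hsl
      exact arc_count k Cc hCrange hinjC hslopeC
    · -- concave case: flip vertically and apply arc_count
      have hk1 : 1 ≤ k := by
        have := (hCrange p₀ hp₀).1
        omega
      set φ : ℕ × ℕ → ℕ × ℕ := fun p => (p.1, k - 1 - p.2) with hφ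
      set Cc' : Finset (ℕ × ℕ) := Cc.image φ with hCc'
      have hφinj : Set.InjOn φ (Cc : Set (ℕ × ℕ)) := by
        intro p hp q hq heq
        simp only [hφ, Prod.mk.injEq] at heq
        have hpk := (hCrange p hp).2
        have hqk := (hCrange q hq).2
        have h2 : p.2 = q.2 := by omega
        exact Prod.ext heq.1 h2
      have hcard' : Cc'.card = Cc.card := Finset.card_image_of_injOn hφinj
      have hrange' : ∀ p ∈ Cc', p.1 < k ∧ p.2 < k := by
        intro p' hp'
        obtain ⟨p, hp, rfl⟩ := Finset.mem_image.1 hp'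
        have := hCrange p hp
        simp only [hφ]
        omega
      have hinj' : ∀ p ∈ Cc', ∀ q ∈ Cc', p.1 = q.1 → p = q := by
        intro p' hp' q' hq' h1
        obtain ⟨p, hp, rfl⟩ := Finset.mem_image.1 hp'
        obtain ⟨q, hq, rfl⟩ := Finset.mem_image.1 hq'
        simp only [hφ] at h1 ⊢
        rw [hinjC p hp q hq h1]
      have hslope' : ∀ p ∈ Cc', ∀ q ∈ Cc', ∀ r ∈ Cc', p.1 < q.1 → q.1 < r.1 →
          ((q.2:ℤ) - (p.2:ℤ)) * ((r.1:ℤ) - (q.1:ℤ))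
            < ((r.2:ℤ) - (q.2:ℤ)) * ((q.1:ℤ) - (p.1:ℤ)) := by
        intro p' hp' q' hq' r' hr' h1 h2
        obtain ⟨p, hp, rfl⟩ := Finset.mem_image.1 hp'
        obtain ⟨q, hq, rfl⟩ := Finset.mem_image.1 hq'
        obtain ⟨r, hr, rfl⟩ := Finset.mem_image.1 hr'
        simp only [hφ] at h1 h2 ⊢
        have hx : (p.1:ℝ) < (q.1:ℝ) := by exact_mod_cast h1
        have hy : (q.1:ℝ) < (r.1:ℝ) := by exact_mod_cast h2
        have hsl := hconc.slope_anti_adjacent (hRIcc p hp) (hRIcc r hr) hx hy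
        beta_reduce at hsl
        rw [← hj p hp, ← hj q hq, ← hj r hr] at hsl
        rw [div_lt_div_iff₀ (by linarith) (by linarith)] at hsl
        have hzsl : ((r.2:ℤ) - (q.2:ℤ)) * ((q.1:ℤ) - (p.1:ℤ))
            < ((q.2:ℤ) - (p.2:ℤ)) * ((r.1:ℤ) - (q.1:ℤ)) := by exact_mod_cast hsl
        have hpk := (hCrange p hp).2
        have hqk := (hCrange q hq).2
        have hrk := (hCrange r hr).2
        have e1 : ((k - 1 - p.2 : ℕ) : ℤ) = (k:ℤ) - 1 - (p.2:ℤ) := by omega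
        have e2 : ((k - 1 - q.2 : ℕ) : ℤ) = (k:ℤ) - 1 - (q.2:ℤ) := by omega
        have e3 : ((k - 1 - r.2 : ℕ) : ℤ) = (k:ℤ) - 1 - (r.2:ℤ) := by omega
        rw [e1, e2, e3]
        ring_nf
        ring_nf at hzsl
        linarith [hzsl]
      have := arc_count k Cc' hrange' hinj' hslope'
      rw [hcard'] at this
      exact this
  -- final assembly
  have hgoodb : (good.card : ℤ) ≤ 16 * (Cc.card : ℤ) + 15 := by
    have h1 : good.card / 16 ≤ Cc.card := hfib
    have h2 : good.card ≤ 16 * (good.card / 16) + 15 := by omega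
    have : good.card ≤ 16 * Cc.card + 15 := by
      calc good.card ≤ 16 * (good.card / 16) + 15 := h2
        _ ≤ 16 * Cc.card + 15 := by omega
    exact_mod_cast this
  have hbadb : (bad.card : ℤ) ≤ 14 := by exact_mod_cast hbadcard
  have hsplit' : (T.card : ℤ) = (bad.card : ℤ) + (good.card : ℤ) := by
    exact_mod_cast hsplitcard.symm
  linarith


/-- If a real elliptic curve in Weierstrass form (nonzero discriminant) contains
at least `k` distinct points of a `k × k` grid, then `k < 174960`. -/
theorem elliptic_curve_grid_points_lt
    (a b c d e : ℝ)
    (hΔ : (WeierstrassCurve.mk a c b d e).Δ ≠ 0)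
    (k : ℕ) (hk : 0 < k)
    (a₁ a₂ e₁ e₂ : ℝ) (he₁ : e₁ ≠ 0) (he₂ : e₂ ≠ 0)
    (h : k ≤ ((Finset.range k ×ˢ Finset.range k).filter
        (fun p : ℕ × ℕ =>
          (a₂ + (p.2 : ℝ) * e₂) ^ 2
            + a * (a₁ + (p.1 : ℝ) * e₁) * (a₂ + (p.2 : ℝ) * e₂)
            + b * (a₂ + (p.2 : ℝ) * e₂)
          = (a₁ + (p.1 : ℝ) * e₁) ^ 3 + c * (a₁ + (p.1 : ℝ) * e₁) ^ 2
            + d * (a₁ + (p.1 : ℝ) * e₁) + e)).card) :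
    k < 174960 := by
  classical
  set T := ((Finset.range k ×ˢ Finset.range k).filter
        (fun p : ℕ × ℕ =>
          (a₂ + (p.2 : ℝ) * e₂) ^ 2
            + a * (a₁ + (p.1 : ℝ) * e₁) * (a₂ + (p.2 : ℝ) * e₂)
            + b * (a₂ + (p.2 : ℝ) * e₂)
          = (a₁ + (p.1 : ℝ) * e₁) ^ 3 + c * (a₁ + (p.1 : ℝ) * e₁) ^ 2
            + d * (a₁ + (p.1 : ℝ) * e₁) + e)) with hTdef
  have hTsub : T ⊆ Finset.range k ×ˢ Finset.range k := Finset.filter_subset _ _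
  have hα : (4:ℝ)*e₁^3 ≠ 0 := by positivity
  have hc₂ : (2:ℝ)*e₂ ≠ 0 := by positivity
  have key := cubic_grid_main (4*e₁^3) (a^2*e₁^2 + 12*a₁*e₁^2 + 4*c*e₁^2)
      (2*(a*a₁+b)*(a*e₁) + 12*a₁^2*e₁ + 8*c*a₁*e₁ + 4*d*e₁)
      ((a*a₁+b)^2 + 4*(a₁^3 + c*a₁^2 + d*a₁ + e))
      (2*e₂) (a*e₁) (2*a₂ + a*a₁ + b) hα hc₂ k T hTsub ?_
  · have hkT : (k:ℤ) ≤ (T.card : ℤ) := by exact_mod_cast h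
    have : 104 * (k:ℤ) ≤ 48 * (k:ℤ) + 5919160 := by linarith
    have : 56 * (k:ℤ) ≤ 5919160 := by linarith
    have hkk : (k:ℤ) < 174960 := by linarith
    exact_mod_cast hkk
  · intro p hp
    rw [hTdef, Finset.mem_filter] at hp
    have hcurve := hp.2
    linear_combination (4:ℝ) * hcurve
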